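/- arXiv:1703.01890 — 5 statements merged into one kernel-verified Lean document; each statement's English description precedes it below -/
import Mathlib

section
/- Let R be a reduced Noetherian commutative ring which is a ℚ-algebra, and let ξ : R → R be a derivation. Then every minimal prime ideal 𝔭 of R satisfies ξ(𝔭) ⊆ 𝔭. -/
/-- Every minimal prime of a reduced Noetherian commutative ℚ-algebra is
invariant under any derivation. -/
theorem derivation_preserves_minimal_prime {R : Type*} [CommRing R] [IsNoetherianRing R]
    [IsReduced R] [Algebra ℚ R] (ξ : Derivation ℚ R R) (p : Ideal R)
    (hp : p ∈ minimalPrimes R) :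
    ∀ x ∈ p, ξ x ∈ p := by
  classical
  intro x hx
  have hpprime : p.IsPrime := hp.1.1
  have hfin : (minimalPrimes R).Finite := minimalPrimes.finite_of_isNoetherianRing R
  -- Find `y` in every other minimal prime but not in `p`.
  obtain ⟨y, hy, hyp⟩ : ∃ y, (∀ q ∈ minimalPrimes R, q ≠ p → y ∈ q) ∧ y ∉ p := by
    by_contra h
    push_neg at h
    have hle : (hfin.toFinset.filter (· ≠ p)).inf id ≤ p := by
      intro y hy
      refine h y fun q hq hqp => ?_
      exact (Submodule.mem_finsetInf.mp hy) q
        (Finset.mem_filter.mpr ⟨hfin.mem_toFinset.mpr hq, hqp⟩)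
    obtain ⟨q, hq, hqle⟩ := hpprime.inf_le'.mp hle
    obtain ⟨hqmem, hqp⟩ := Finset.mem_filter.mp hq
    have hqmin := hfin.mem_toFinset.mp hqmem
    exact hqp (le_antisymm hqle (hp.2 ⟨hqmin.1.1, bot_le⟩ hqle))
  -- `x * y` lies in every minimal prime, hence in the nilradical, hence is zero.
  have hxy : x * y = 0 := by
    have : x * y ∈ nilradical R := by
      rw [nilradical_eq_sInf]
      refine Ideal.mem_sInf.mpr fun {q} hq => ?_
      haveI : q.IsPrime := hq
      obtain ⟨q', hq', hle⟩ := Ideal.exists_minimalPrimes_le (bot_le (a := q))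
      by_cases hq'p : q' = p
      · exact hle (hq'p ▸ Ideal.mul_mem_right _ _ hx)
      · exact hle (Ideal.mul_mem_left _ _ (hy q' hq' hq'p))
    rwa [nilradical_eq_zero, Ideal.zero_eq_bot, Ideal.mem_bot] at this
  -- Differentiate: `x * ξ y + y * ξ x = 0`.
  have hleib : x * ξ y + y * ξ x = 0 := by
    have := ξ.leibniz x y
    rw [hxy, map_zero, smul_eq_mul, smul_eq_mul] at this
    linear_combination -this
  have : y * ξ x ∈ p := by
    have : y * ξ x = -(x * ξ y) := by linear_combination hleib
    rw [this]
    exact neg_mem (Ideal.mul_mem_right _ _ hx)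
  rcases hpprime.mem_or_mem this with h | h
  · exact absurd h hyp
  · exact h
end

section
/- Let R be a commutative ring, ξ a derivation of R, and suppose f ∈ R satisfies fⁿ = 0 for some n ≥ 1. Assume R is a ℚ-algebra. Then there exist natural numbers q such that (ξ f)^q · f^e = 0 with e = 0; that is, ξ f is nilpotent. -/
/-- In a commutative ℚ-algebra, the derivative of a nilpotent element under any
derivation is again nilpotent. -/
theorem derivation_of_nilpotent_isNilpotent {R : Type*} [CommRing R] [Algebra ℚ R]
    (ξ : Derivation ℚ R R) (f : R) (n : ℕ) (hn : 1 ≤ n) (hf : f ^ n = 0) :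
    IsNilpotent (ξ f) := by
  have key : ∀ m j : ℕ, f ^ (m + 1) * (ξ f) ^ j = 0 → f ^ m * (ξ f) ^ (j + 2) = 0 := by
    intro m j h
    have h1 : ξ (f ^ (m + 1) * (ξ f) ^ j) = 0 := by rw [h, map_zero]
    rw [Derivation.leibniz, Derivation.leibniz_pow, Derivation.leibniz_pow] at h1
    simp only [smul_eq_mul, nsmul_eq_mul, Nat.add_sub_cancel, Nat.cast_add, Nat.cast_one] at h1
    have h2 := congrArg (· * ξ f) h1
    simp only [zero_mul] at h2
    have hterm : f ^ (m + 1) * (↑j * ((ξ f) ^ (j - 1) * ξ (ξ f))) * ξ f = 0 := by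
      rcases Nat.eq_zero_or_pos j with hj | hj
      · simp [hj]
      · have hp : (ξ f) ^ (j - 1) * ξ f = (ξ f) ^ j := by
          rw [← pow_succ, Nat.sub_add_cancel hj]
        have h3 : f ^ (m + 1) * (ξ f) ^ (j - 1) * ξ f = 0 := by
          rw [mul_assoc, hp, h]
        calc f ^ (m + 1) * (↑j * ((ξ f) ^ (j - 1) * ξ (ξ f))) * ξ f
            = ↑j * (f ^ (m + 1) * (ξ f) ^ (j - 1) * ξ f * ξ (ξ f)) := by ring
          _ = 0 := by rw [h3]; ring
    have h4 : ((m : R) + 1) * (f ^ m * (ξ f) ^ (j + 2)) = 0 := by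
      have : (f ^ (m + 1) * (↑j * ((ξ f) ^ (j - 1) * ξ (ξ f))) +
          (ξ f) ^ j * ((↑m + 1) * (f ^ m * ξ f))) * ξ f =
          f ^ (m + 1) * (↑j * ((ξ f) ^ (j - 1) * ξ (ξ f))) * ξ f +
          ((m : R) + 1) * (f ^ m * (ξ f) ^ (j + 2)) := by ring
      rw [this, hterm, zero_add] at h2
      exact h2
    have h5 : ((m + 1 : ℚ)) • (f ^ m * (ξ f) ^ (j + 2)) = 0 := by
      rw [Algebra.smul_def]
      convert h4 using 2
      push_cast
      ring
    have h6 := congrArg (((m + 1 : ℚ))⁻¹ • ·) h5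
    simpa [smul_smul, inv_mul_cancel₀ (by positivity : (m + 1 : ℚ) ≠ 0)] using h6
  -- induction: f ^ (n - k) * (ξ f) ^ (2k) = 0 for all k ≤ n ... use descent
  have main : ∀ m j : ℕ, f ^ m * (ξ f) ^ j = 0 → IsNilpotent (ξ f) := by
    intro m
    induction m with
    | zero => intro j h; exact ⟨j, by simpa using h⟩
    | succ m ih => intro j h; exact ih (j + 2) (key m j h)
  exact main n 0 (by simpa using hf)
end

section
/- Every U-equivariant polynomial map φ : 𝔲 → 𝔲 (for the adjoint action of the 3×3 unitriangular group U on its Lie algebra 𝔲, coordinatized by (x,y,z) with Ad(u)(x,y,z) = (x, −cx+y+az, z)) has the form φ(x,y,z) = q₁(x,z)·(x,y,z) + q₀(x,z)·(0,1,0) for some polynomials q₀, q₁ ∈ k[x,z]. -/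
open MvPolynomial

/-- Every `U`-equivariant polynomial map `φ : 𝔲 → 𝔲` for the adjoint action
`(x,y,z) ↦ (x, -cx + y + az, z)` has the form
`φ(x,y,z) = q₁(x,z)·(x,y,z) + q₀(x,z)·(0,1,0)`. -/
theorem covariants_of_unitriangular {k : Type*} [Field k] [CharZero k] [IsAlgClosed k]
    (φ : (Fin 3 → k) → (Fin 3 → k))
    (hpoly : ∃ P : Fin 3 → MvPolynomial (Fin 3) k,
      ∀ (v : Fin 3 → k) (i : Fin 3), φ v i = MvPolynomial.eval v (P i))
    (hequiv : ∀ (a c : k) (v : Fin 3 → k),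
      φ ![v 0, -c * v 0 + v 1 + a * v 2, v 2] =
        ![φ v 0, -c * φ v 0 + φ v 1 + a * φ v 2, φ v 2]) :
    ∃ q₀ q₁ : MvPolynomial (Fin 2) k, ∀ v : Fin 3 → k,
      φ v = MvPolynomial.eval ![v 0, v 2] q₁ • v +
        MvPolynomial.eval ![v 0, v 2] q₀ • ![0, 1, 0] := by
  obtain ⟨P, hP⟩ := hpoly
  -- Key functional identity, valid when `x ≠ 0` and `z ≠ 0`.
  have key : ∀ x z : k, x ≠ 0 → z ≠ 0 → ∀ y : k,
      φ ![x, y, z] 0 = (φ ![x, 1, z] 1 - φ ![x, 0, z] 1) * x ∧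
      φ ![x, y, z] 1 = (φ ![x, 1, z] 1 - φ ![x, 0, z] 1) * y + φ ![x, 0, z] 1 ∧
      φ ![x, y, z] 2 = (φ ![x, 1, z] 1 - φ ![x, 0, z] 1) * z := by
    intro x z hx hz y
    have hW : ∀ w : k, φ ![x, w, z] =
        ![φ ![x,0,z] 0, φ ![x,0,z] 1 + w / z * φ ![x,0,z] 2, φ ![x,0,z] 2] := by
      intro w
      have h := hequiv (w / z) 0 ![x, 0, z]
      have e : -(0:k) * x + 0 + w / z * z = w := by field_simp; ring
      simp only [Matrix.cons_val_zero, Matrix.cons_val_one, Matrix.head_cons,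
        Matrix.cons_val_two, Matrix.tail_cons] at h
      rw [e] at h
      rw [h]
      funext i
      fin_cases i <;> simp
    have hX : ∀ w : k, φ ![x, w, z] =
        ![φ ![x,0,z] 0, w / x * φ ![x,0,z] 0 + φ ![x,0,z] 1, φ ![x,0,z] 2] := by
      intro w
      have h := hequiv 0 (-(w / x)) ![x, 0, z]
      have e : -(-(w / x)) * x + 0 + (0:k) * z = w := by field_simp; ring
      simp only [Matrix.cons_val_zero, Matrix.cons_val_one, Matrix.head_cons,
        Matrix.cons_val_two, Matrix.tail_cons] at h
      rw [e] at h
      rw [h]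
      funext i
      fin_cases i <;> simp
    have h1W := congrFun (hW 1) 1
    have h1X := congrFun (hX 1) 1
    simp only [Matrix.cons_val_one, Matrix.head_cons, Matrix.cons_val_zero] at h1W h1X
    have hr : φ ![x,1,z] 1 - φ ![x,0,z] 1 = 1 / z * φ ![x,0,z] 2 := by
      rw [h1W]; ring
    have hp : φ ![x,1,z] 1 - φ ![x,0,z] 1 = 1 / x * φ ![x,0,z] 0 := by
      rw [h1X]; ring
    have hyW := hW y
    refine ⟨?_, ?_, ?_⟩
    · rw [congrFun hyW 0, hp]
      simp only [Matrix.cons_val_zero]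
      field_simp
    · rw [congrFun hyW 1, hr]
      simp only [Matrix.cons_val_one, Matrix.head_cons, Matrix.cons_val_zero]
      ring
    · rw [congrFun hyW 2, hr]
      simp only [Matrix.cons_val_two, Matrix.tail_cons, Matrix.head_cons]
      field_simp
  -- Evaluation of `bind₁`.
  have evalb : ∀ {m n : ℕ} (g : Fin m → MvPolynomial (Fin n) k) (w : Fin n → k)
      (p : MvPolynomial (Fin m) k),
      eval w (bind₁ g p) = eval (fun i => eval w (g i)) p := by
    intro m n g w p
    exact eval₂Hom_bind₁ (RingHom.id k) w g p
  set q₀ : MvPolynomial (Fin 2) k := bind₁ ![X 0, 0, X 1] (P 1) with hq₀def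
  set q₁ : MvPolynomial (Fin 2) k := bind₁ ![X 0, 1, X 1] (P 1) - q₀ with hq₁def
  have hq₀ : ∀ x z : k, eval ![x, z] q₀ = φ ![x, 0, z] 1 := by
    intro x z
    rw [hq₀def, evalb,
      show (fun i => eval ![x, z] (![X 0, 0, X 1] i)) = ![x, 0, z] by
        funext i; fin_cases i <;> simp, hP]
  have hq₁ : ∀ x z : k, eval ![x, z] q₁ = φ ![x, 1, z] 1 - φ ![x, 0, z] 1 := by
    intro x z
    rw [hq₁def, map_sub, evalb,
      show (fun i => eval ![x, z] (![X 0, 1, X 1] i)) = ![x, 1, z] by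
        funext i; fin_cases i <;> simp, hq₀ x z, ← hP]
  set Q₀ : MvPolynomial (Fin 3) k := bind₁ ![X 0, X 2] q₀ with hQ₀def
  set Q₁ : MvPolynomial (Fin 3) k := bind₁ ![X 0, X 2] q₁ with hQ₁def
  have hQ₀ : ∀ v : Fin 3 → k, eval v Q₀ = eval ![v 0, v 2] q₀ := by
    intro v
    rw [hQ₀def, evalb,
      show (fun i => eval v (![X 0, X 2] i)) = ![v 0, v 2] by
        funext i; fin_cases i <;> simp]
  have hQ₁ : ∀ v : Fin 3 → k, eval v Q₁ = eval ![v 0, v 2] q₁ := by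
    intro v
    rw [hQ₁def, evalb,
      show (fun i => eval v (![X 0, X 2] i)) = ![v 0, v 2] by
        funext i; fin_cases i <;> simp]
  have hXX : (X 0 * X 2 : MvPolynomial (Fin 3) k) ≠ 0 :=
    mul_ne_zero (X_ne_zero _) (X_ne_zero _)
  have hveta : ∀ v : Fin 3 → k, v = ![v 0, v 1, v 2] := by
    intro v; funext i; fin_cases i <;> rfl
  have main : ∀ v : Fin 3 → k, v 0 ≠ 0 → v 2 ≠ 0 →
      φ v 0 = eval v Q₁ * v 0 ∧
      φ v 1 = eval v Q₁ * v 1 + eval v Q₀ ∧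
      φ v 2 = eval v Q₁ * v 2 := by
    intro v h0 h2
    have k1 := key (v 0) (v 2) h0 h2 (v 1)
    rw [← hveta v] at k1
    rw [hQ₀ v, hQ₁ v, hq₀, hq₁]
    exact ⟨k1.1, by rw [k1.2.1], k1.2.2⟩
  have e0 : P 0 = Q₁ * X 0 := by
    apply mul_left_cancel₀ hXX
    apply MvPolynomial.funext
    intro w
    simp only [map_mul, eval_X]
    by_cases h0 : w 0 = 0
    · rw [h0]; ring
    by_cases h2 : w 2 = 0
    · rw [h2]; ring
    rw [← hP, (main w h0 h2).1]
  have e1 : P 1 = Q₁ * X 1 + Q₀ := by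
    apply mul_left_cancel₀ hXX
    apply MvPolynomial.funext
    intro w
    simp only [map_mul, map_add, eval_X]
    by_cases h0 : w 0 = 0
    · rw [h0]; ring
    by_cases h2 : w 2 = 0
    · rw [h2]; ring
    rw [← hP, (main w h0 h2).2.1]
  have e2 : P 2 = Q₁ * X 2 := by
    apply mul_left_cancel₀ hXX
    apply MvPolynomial.funext
    intro w
    simp only [map_mul, eval_X]
    by_cases h0 : w 0 = 0
    · rw [h0]; ring
    by_cases h2 : w 2 = 0
    · rw [h2]; ring
    rw [← hP, (main w h0 h2).2.2]
  refine ⟨q₀, q₁, ?_⟩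
  intro v
  have g0 : φ v 0 = eval ![v 0, v 2] q₁ * v 0 := by
    rw [hP v 0, e0, map_mul, eval_X, hQ₁ v]
  have g1 : φ v 1 = eval ![v 0, v 2] q₁ * v 1 + eval ![v 0, v 2] q₀ := by
    rw [hP v 1, e1, map_add, map_mul, eval_X, hQ₁ v, hQ₀ v]
  have g2 : φ v 2 = eval ![v 0, v 2] q₁ * v 2 := by
    rw [hP v 2, e2, map_mul, eval_X, hQ₁ v]
  funext i
  fin_cases i
  · simpa using g0
  · simpa using g1
  · simpa using g2
end

section
/- For m ≥ 1 even, the alternating sum Σ_{i=1}^{m−1} (−1)^i C(m, i−1) C(m, i) C(m, i+1) is nonzero. -/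
open Finset

/-! Auxiliary definitions for the Zeilberger-style proof. -/

/-- summand: `F n k = (-1)^(k+1) C(2n,k) C(2n,k+1) C(2n,k+2)`. -/
def konvF (n k : ℕ) : ℤ :=
  (-1) ^ (k + 1) * ((2 * n).choose k : ℤ) * ((2 * n).choose (k + 1) : ℤ) *
    ((2 * n).choose (k + 2) : ℤ)

/-- the sum `S n`. -/
def konvS (n : ℕ) : ℤ := ∑ k ∈ Finset.range (2 * n - 1), konvF n k

def konvA0 (n : ℕ) : ℤ := 3 * (n + 1) * (2 * n + 1) * (3 * n + 1) * (3 * n + 2)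

def konvA1 (n : ℕ) : ℤ := (n : ℤ) ^ 2 * (n + 2) * (2 * n + 3)

/-- certificate polynomial. -/
def konvR (n k : ℕ) : ℤ :=
  (-(48 : ℤ) * n - 520 * (n : ℤ) ^ 2 - 2240 * (n : ℤ) ^ 3 - 4936 * (n : ℤ) ^ 4 -
      5888 * (n : ℤ) ^ 5 - 3616 * (n : ℤ) ^ 6 - 896 * (n : ℤ) ^ 7) +
    (12 + 234 * (n : ℤ) + 1434 * (n : ℤ) ^ 2 + 4080 * (n : ℤ) ^ 3 + 5964 * (n : ℤ) ^ 4 +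
      4344 * (n : ℤ) ^ 5 + 1248 * (n : ℤ) ^ 6) * k +
    (-(30 : ℤ) - 327 * (n : ℤ) - 1293 * (n : ℤ) ^ 2 - 2388 * (n : ℤ) ^ 3 - 2088 * (n : ℤ) ^ 4 -
      696 * (n : ℤ) ^ 5) * (k : ℤ) ^ 2 +
    (24 + 168 * (n : ℤ) + 426 * (n : ℤ) ^ 2 + 462 * (n : ℤ) ^ 3 + 180 * (n : ℤ) ^ 4) *
      (k : ℤ) ^ 3 +
    (-(6 : ℤ) - 27 * (n : ℤ) - 39 * (n : ℤ) ^ 2 - 18 * (n : ℤ) ^ 3) * (k : ℤ) ^ 4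

/-- certificate function `g`. -/
def konvG (n j : ℕ) : ℤ :=
  (-1) ^ j * konvR n (j + 1) * ((2 * n + 1).choose j : ℤ) * ((2 * n + 1).choose (j + 1) : ℤ) *
    ((2 * n + 1).choose (j + 2) : ℤ)

/-- unconditional cast version of `Nat.choose_succ_right_eq`. -/
lemma konv_cast_ratio (m k : ℕ) :
    ((m.choose (k + 1) : ℚ)) * ((k : ℚ) + 1) = (m.choose k : ℚ) * ((m : ℚ) - (k : ℚ)) := by
  rcases le_or_gt k m with h | h
  · have h' := Nat.choose_succ_right_eq m k
    have h2 := congrArg (Nat.cast : ℕ → ℚ) h'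
    push_cast [Nat.cast_sub h] at h2
    linarith
  · have h1 : m.choose (k + 1) = 0 := Nat.choose_eq_zero_of_lt (h.trans (Nat.lt_succ_self k))
    have h2 : m.choose k = 0 := Nat.choose_eq_zero_of_lt h
    simp [h1, h2]

/-- unconditional cast version of `Nat.choose_mul_succ_eq`. -/
lemma konv_cast_top (m k : ℕ) :
    (((m + 1).choose k : ℚ)) * ((m : ℚ) + 1 - (k : ℚ)) = (m.choose k : ℚ) * ((m : ℚ) + 1) := by
  rcases le_or_gt k (m + 1) with h | h
  · have h' := Nat.choose_mul_succ_eq m k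
    have h2 := congrArg (Nat.cast : ℕ → ℚ) h'
    push_cast [Nat.cast_sub h] at h2
    linarith
  · have h1 : (m + 1).choose k = 0 := Nat.choose_eq_zero_of_lt h
    have h2 : m.choose k = 0 := Nat.choose_eq_zero_of_lt ((Nat.lt_succ_self m).trans h)
    simp [h1, h2]

set_option maxHeartbeats 4000000 in
lemma konv_key (n j : ℕ) :
    2 * (2 * (n : ℤ) + 1) ^ 3 *
        (konvA0 n * konvF n (j + 1) + konvA1 n * konvF (n + 1) (j + 1)) =
      konvG n (j + 1) - konvG n j := by
  have key_q :
      ((2 * (2 * (n : ℤ) + 1) ^ 3 *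
          (konvA0 n * konvF n (j + 1) + konvA1 n * konvF (n + 1) (j + 1)) : ℤ) : ℚ) =
        ((konvG n (j + 1) - konvG n j : ℤ) : ℚ) := by
    simp only [konvF, konvG, konvA0, konvA1, konvR]
    rw [show 2 * (n + 1) = 2 * n + 2 by omega]
    simp only [show j + 1 + 1 = j + 2 by omega, show j + 1 + 2 = j + 3 by omega]
    push_cast
    -- Pascal expansions
    have hp1 : ((2 * n).choose (j + 1) : ℚ) =
        ((2 * n + 1).choose (j + 1) : ℚ) - ((2 * n).choose j : ℚ) := by
      have := Nat.choose_succ_succ (2 * n) j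
      have h2 := congrArg (Nat.cast : ℕ → ℚ) this
      push_cast at h2
      linarith
    have hp2 : ((2 * n).choose (j + 2) : ℚ) =
        ((2 * n + 1).choose (j + 2) : ℚ) - ((2 * n + 1).choose (j + 1) : ℚ) +
          ((2 * n).choose j : ℚ) := by
      have := Nat.choose_succ_succ (2 * n) (j + 1)
      have h2 := congrArg (Nat.cast : ℕ → ℚ) this
      simp only [Nat.succ_eq_add_one] at h2
      push_cast at h2
      rw [show j + 1 + 1 = j + 2 by omega] at h2
      rw [hp1] at h2
      linarith
    have hp3 : ((2 * n).choose (j + 3) : ℚ) =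
        ((2 * n + 1).choose (j + 3) : ℚ) - ((2 * n + 1).choose (j + 2) : ℚ) +
          ((2 * n + 1).choose (j + 1) : ℚ) - ((2 * n).choose j : ℚ) := by
      have := Nat.choose_succ_succ (2 * n) (j + 2)
      have h2 := congrArg (Nat.cast : ℕ → ℚ) this
      simp only [Nat.succ_eq_add_one] at h2
      push_cast at h2
      rw [show j + 2 + 1 = j + 3 by omega] at h2
      rw [hp2] at h2
      linarith
    have hq1 : ((2 * n + 2).choose (j + 1) : ℚ) =
        ((2 * n + 1).choose j : ℚ) + ((2 * n + 1).choose (j + 1) : ℚ) := by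
      have := Nat.choose_succ_succ (2 * n + 1) j
      have h2 := congrArg (Nat.cast : ℕ → ℚ) this
      push_cast at h2
      linarith
    have hq2 : ((2 * n + 2).choose (j + 2) : ℚ) =
        ((2 * n + 1).choose (j + 1) : ℚ) + ((2 * n + 1).choose (j + 2) : ℚ) := by
      have := Nat.choose_succ_succ (2 * n + 1) (j + 1)
      have h2 := congrArg (Nat.cast : ℕ → ℚ) this
      simp only [Nat.succ_eq_add_one] at h2
      push_cast at h2
      rw [show j + 1 + 1 = j + 2 by omega] at h2
      linarith
    have hq3 : ((2 * n + 2).choose (j + 3) : ℚ) =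
        ((2 * n + 1).choose (j + 2) : ℚ) + ((2 * n + 1).choose (j + 3) : ℚ) := by
      have := Nat.choose_succ_succ (2 * n + 1) (j + 2)
      have h2 := congrArg (Nat.cast : ℕ → ℚ) this
      simp only [Nat.succ_eq_add_one] at h2
      push_cast at h2
      rw [show j + 2 + 1 = j + 3 by omega] at h2
      linarith
    -- ratio relations
    have hj1 : ((j : ℚ) + 1) ≠ 0 := by positivity
    have hj2 : ((j : ℚ) + 2) ≠ 0 := by positivity
    have hj3 : ((j : ℚ) + 3) ≠ 0 := by positivity
    have hN : (2 * (n : ℚ) + 1) ≠ 0 := by positivity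
    have he1 : ((2 * n + 1).choose (j + 1) : ℚ) =
        (2 * (n : ℚ) + 1 - (j : ℚ)) * ((2 * n + 1).choose j : ℚ) / ((j : ℚ) + 1) := by
      rw [eq_div_iff hj1]
      have := konv_cast_ratio (2 * n + 1) j
      push_cast at this
      linarith
    have he2 : ((2 * n + 1).choose (j + 2) : ℚ) =
        (2 * (n : ℚ) - (j : ℚ)) * ((2 * n + 1).choose (j + 1) : ℚ) / ((j : ℚ) + 2) := by
      rw [eq_div_iff hj2]
      have := konv_cast_ratio (2 * n + 1) (j + 1)
      rw [show j + 1 + 1 = j + 2 by omega] at this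
      push_cast at this
      linarith
    have he3 : ((2 * n + 1).choose (j + 3) : ℚ) =
        (2 * (n : ℚ) - 1 - (j : ℚ)) * ((2 * n + 1).choose (j + 2) : ℚ) / ((j : ℚ) + 3) := by
      rw [eq_div_iff hj3]
      have := konv_cast_ratio (2 * n + 1) (j + 2)
      rw [show j + 2 + 1 = j + 3 by omega] at this
      push_cast at this
      linarith
    have hez : ((2 * n).choose j : ℚ) =
        (2 * (n : ℚ) + 1 - (j : ℚ)) * ((2 * n + 1).choose j : ℚ) / (2 * (n : ℚ) + 1) := by
      rw [eq_div_iff hN]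
      have := konv_cast_top (2 * n) j
      push_cast at this
      linarith
    rw [hp1, hp2, hp3, hq1, hq2, hq3, he3, he2, he1, hez]
    rw [show ((-1 : ℚ)) ^ (j + 2) = (-1) ^ j by rw [pow_add]; norm_num,
      show ((-1 : ℚ)) ^ (j + 1) = -(-1) ^ j by rw [pow_succ]; ring]
    field_simp
    ring
  exact_mod_cast key_q

lemma konv_key0 (n : ℕ) :
    2 * (2 * (n : ℤ) + 1) ^ 3 * (konvA0 n * konvF n 0 + konvA1 n * konvF (n + 1) 0) =
      konvG n 0 := by
  have key_q :
      ((2 * (2 * (n : ℤ) + 1) ^ 3 * (konvA0 n * konvF n 0 + konvA1 n * konvF (n + 1) 0) : ℤ) : ℚ) =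
        ((konvG n 0 : ℤ) : ℚ) := by
    simp only [konvF, konvG, konvA0, konvA1, konvR]
    rw [show 2 * (n + 1) = 2 * n + 2 by omega]
    simp only [Nat.choose_zero_right, Nat.choose_one_right, Nat.zero_add, zero_add]
    push_cast
    have hc2 : ∀ m : ℕ, ((m.choose 2 : ℚ)) = (m : ℚ) * ((m : ℚ) - 1) / 2 := by
      intro m
      have := konv_cast_ratio m 1
      rw [show (1 : ℕ) + 1 = 2 by omega] at this
      rw [Nat.choose_one_right] at this
      push_cast at this
      rw [eq_div_iff (by norm_num : (2 : ℚ) ≠ 0)]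
      linarith
    rw [hc2 (2 * n), hc2 (2 * n + 1), hc2 (2 * n + 2)]
    push_cast
    ring
  exact_mod_cast key_q

lemma konvF_eq_zero {n k : ℕ} (h : 2 * n - 1 ≤ k) : konvF n k = 0 := by
  have : 2 * n < k + 2 := by omega
  simp [konvF, Nat.choose_eq_zero_of_lt this]

lemma konvS_eq (n N : ℕ) (h : 2 * n - 1 ≤ N) :
    ∑ k ∈ Finset.range N, konvF n k = konvS n := by
  rw [konvS]
  exact (Finset.sum_subset (Finset.range_subset_range.2 h)
    (fun x _ hx => konvF_eq_zero (by simp at hx; omega))).symm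

lemma konv_rec (n : ℕ) : konvA0 n * konvS n + konvA1 n * konvS (n + 1) = 0 := by
  have h2 : (2 * (2 * (n : ℤ) + 1) ^ 3) ≠ 0 := by positivity
  apply mul_left_cancel₀ h2
  rw [mul_zero]
  rw [← konvS_eq n (2 * n + 3) (by omega), ← konvS_eq (n + 1) (2 * n + 3) (by omega)]
  have hsum : 2 * (2 * (n : ℤ) + 1) ^ 3 *
      (konvA0 n * (∑ k ∈ Finset.range (2 * n + 3), konvF n k) +
        konvA1 n * (∑ k ∈ Finset.range (2 * n + 3), konvF (n + 1) k)) =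
      ∑ k ∈ Finset.range (2 * n + 3),
        2 * (2 * (n : ℤ) + 1) ^ 3 * (konvA0 n * konvF n k + konvA1 n * konvF (n + 1) k) := by
    rw [Finset.mul_sum, Finset.mul_sum, ← Finset.sum_add_distrib, Finset.mul_sum]
  rw [hsum]
  rw [show 2 * n + 3 = (2 * n + 2) + 1 by omega, Finset.sum_range_succ']
  have hstep : ∑ j ∈ Finset.range (2 * n + 2),
      2 * (2 * (n : ℤ) + 1) ^ 3 *
        (konvA0 n * konvF n (j + 1) + konvA1 n * konvF (n + 1) (j + 1)) =
      konvG n (2 * n + 2) - konvG n 0 := by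
    rw [Finset.sum_congr rfl fun j _ => konv_key n j]
    exact Finset.sum_range_sub (konvG n) (2 * n + 2)
  rw [hstep, konv_key0]
  have hzero : konvG n (2 * n + 2) = 0 := by
    have : 2 * n + 1 < 2 * n + 2 := by omega
    simp [konvG, Nat.choose_eq_zero_of_lt this]
  rw [hzero]
  ring

lemma konvS_ne_zero (n : ℕ) (h : 1 ≤ n) : konvS n ≠ 0 := by
  induction n with
  | zero => omega
  | succ k ih =>
    rcases Nat.lt_or_ge k 1 with hk | hk
    · interval_cases k
      · have : konvS 1 = -2 := by
          simp [konvS, konvF, Finset.sum_range_one]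
        rw [this]; norm_num
    · have hr := konv_rec k
      have ha0 : konvA0 k ≠ 0 := by
        have : (0 : ℤ) < konvA0 k := by
          unfold konvA0
          positivity
        omega
      have ha1 : konvA1 k ≠ 0 := by
        have hk' : (1 : ℤ) ≤ (k : ℤ) := by exact_mod_cast hk
        have : (0 : ℤ) < konvA1 k := by
          unfold konvA1
          nlinarith
        omega
      intro hS
      rw [hS, mul_zero, add_zero] at hr
      exact (mul_ne_zero ha0 (ih hk)) hr

/-- For even `m ≥ 1`, the alternating sum `Σ_{i=1}^{m-1} (-1)^i C(m,i-1) C(m,i) C(m,i+1)`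
is nonzero (Konvalinka). -/
theorem konvalinka_alternating_sum_ne_zero (m : ℕ) (hm : 1 ≤ m) (hme : Even m) :
    (∑ i ∈ Finset.Icc 1 (m - 1),
        (-1 : ℤ) ^ i * (m.choose (i - 1) : ℤ) * (m.choose i : ℤ) * (m.choose (i + 1) : ℤ)) ≠
      0 := by
  obtain ⟨t, ht⟩ := hme
  have hm2 : m = 2 * t := by omega
  have ht1 : 1 ≤ t := by omega
  subst hm2
  have hsum : (∑ i ∈ Finset.Icc 1 (2 * t - 1),
      (-1 : ℤ) ^ i * ((2 * t).choose (i - 1) : ℤ) * ((2 * t).choose i : ℤ) *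
        ((2 * t).choose (i + 1) : ℤ)) = konvS t := by
    rw [← Finset.Ico_add_one_right_eq_Icc, show 2 * t - 1 + 1 = 2 * t by omega,
      Finset.sum_Ico_eq_sum_range]
    rw [konvS]
    apply Finset.sum_congr rfl
    intro i _
    rw [konvF]
    simp only [show 1 + i - 1 = i by omega]
    simp only [show 1 + i = i + 1 by omega]
  rw [hsum]
  exact konvS_ne_zero t ht1
end

section
/- The combinatorial identity: for natural numbers m ≥ 1 and even r = 2s with 0 ≤ r < 2m, Σ_{i=r−m+1}^{m−1} (−1)^i C(r,i) (m−r+i)_{r−i} (m−i+2)_i (m−i)_i (m−r+i+2)_{r−i} = (−1)^s (2s)! (m−1)! (m+1)! (2m−s)! / (s! (m−s−1)! (m−s+1)! (2m−2s)!), where (x)_n = x(x+1)⋯(x+n−1) is the rising factorial. -/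
open Finset

namespace TransvectantAux

/-- Binomial coefficient `C(n,k)` for integer `k`, zero outside range. -/
def B (n : ℕ) (k : ℤ) : ℚ :=
  if 0 ≤ k ∧ k ≤ (n : ℤ) then ((n.choose k.toNat : ℕ) : ℚ) else 0

lemma B_of_neg {n : ℕ} {k : ℤ} (h : k < 0) : B n k = 0 := by
  simp [B]; intro h'; omega

lemma B_of_gt {n : ℕ} {k : ℤ} (h : (n : ℤ) < k) : B n k = 0 := by
  simp [B]; intro h'; omega

lemma B_eq_choose {n : ℕ} {k : ℤ} {j : ℕ} (h1 : k = (j : ℤ)) (h2 : j ≤ n) :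
    B n k = (n.choose j : ℚ) := by
  subst h1
  simp [B, Int.toNat_natCast]
  omega

lemma B_zero (n : ℕ) : B n 0 = 1 := by simp [B]

lemma L1 (n : ℕ) (m : ℤ) :
    (m : ℚ) * B (n + 1) m = ((n : ℚ) + 1) * B n (m - 1) := by
  rcases lt_trichotomy m 0 with h | h | h
  · rw [B_of_neg h, B_of_neg (by omega)]; ring
  · subst h; rw [B_of_neg (by norm_num : (0:ℤ) - 1 < 0)]; simp
  · obtain ⟨j, rfl⟩ : ∃ j : ℕ, m = (j : ℤ) + 1 := ⟨(m - 1).toNat, by omega⟩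
    by_cases hj : j ≤ n
    · rw [B_eq_choose (by push_cast; ring) (by omega : j + 1 ≤ n + 1),
        B_eq_choose (by push_cast; ring) hj]
      have := Nat.add_one_mul_choose_eq n j
      have : ((n + 1) * n.choose j : ℕ) = ((n + 1).choose (j + 1) * (j + 1) : ℕ) := this
      have h2 : ((n : ℚ) + 1) * (n.choose j : ℚ) = ((n + 1).choose (j + 1) : ℚ) * ((j : ℚ) + 1) := by
        exact_mod_cast congrArg (Nat.cast (R := ℚ)) this
      push_cast
      linarith [h2]
    · rw [B_of_gt (by push_cast; omega), B_of_gt (by push_cast; omega)]; ring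

lemma L2 (n : ℕ) (m : ℤ) :
    ((n : ℚ) + 1 - (m : ℚ)) * B (n + 1) m = ((n : ℚ) + 1) * B n m := by
  rcases lt_trichotomy m 0 with h | h | h
  · rw [B_of_neg h, B_of_neg h]; ring
  · subst h
    rw [B_zero, B_zero]; push_cast; ring
  · obtain ⟨j, rfl⟩ : ∃ j : ℕ, m = (j : ℤ) := ⟨m.toNat, by omega⟩
    by_cases hj : j ≤ n
    · rw [B_eq_choose rfl (by omega), B_eq_choose rfl hj]
      have := Nat.choose_mul_succ_eq n j
      have h2 : ((n.choose j : ℚ)) * ((n:ℚ) + 1) = ((n+1).choose j : ℚ) * (((n + 1 - j : ℕ) : ℚ)) := by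
        exact_mod_cast congrArg (Nat.cast (R := ℚ)) this
      have h3 : ((n + 1 - j : ℕ) : ℚ) = (n : ℚ) + 1 - (j : ℚ) := by
        push_cast [Nat.cast_sub (by omega : j ≤ n + 1)]; ring
      rw [h3] at h2
      push_cast
      linarith [h2]
    · by_cases hj1 : j = n + 1
      · subst hj1
        have hz : B n (((n+1 : ℕ) : ℤ)) = 0 := B_of_gt (by push_cast; omega)
        rw [hz]
        push_cast; ring
      · rw [B_of_gt (by push_cast; omega), B_of_gt (by push_cast; omega)]; ring

lemma L3 (n : ℕ) (m : ℤ) :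
    (m : ℚ) * B n m = ((n : ℚ) - (m : ℚ) + 1) * B n (m - 1) := by
  rcases lt_trichotomy m 0 with h | h | h
  · rw [B_of_neg h, B_of_neg (by omega)]; ring
  · subst h; rw [B_of_neg (by norm_num : (0:ℤ) - 1 < 0)]; simp
  · obtain ⟨j, rfl⟩ : ∃ j : ℕ, m = (j : ℤ) + 1 := ⟨(m - 1).toNat, by omega⟩
    by_cases hj : j + 1 ≤ n
    · rw [B_eq_choose (by push_cast; ring) hj,
        B_eq_choose (by push_cast; ring) (by omega : j ≤ n)]
      have := Nat.choose_succ_right_eq n j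
      have h2 : (n.choose (j+1) : ℚ) * ((j:ℚ) + 1) = (n.choose j : ℚ) * ((n - j : ℕ) : ℚ) := by
        exact_mod_cast congrArg (Nat.cast (R := ℚ)) this
      have h3 : ((n - j : ℕ) : ℚ) = (n : ℚ) - (j : ℚ) := by
        push_cast [Nat.cast_sub (by omega : j ≤ n)]; ring
      rw [h3] at h2
      push_cast
      linarith [h2]
    · by_cases hj1 : j = n
      · have hz : B n ((j : ℤ) + 1) = 0 := B_of_gt (by omega)
        rw [hz, hj1]
        push_cast; ring
      · rw [B_of_gt (by push_cast; omega), B_of_gt (by push_cast; omega)]; ring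

/-- Dixon summand. -/
def T (a b c : ℕ) (k : ℤ) : ℚ :=
  (-1 : ℚ) ^ k * B (a + b) ((a : ℤ) + k) * B (b + c) ((b : ℤ) + k) * B (c + a) ((c : ℤ) + k)

lemma T_zero_of_lt_a {a b c : ℕ} {k : ℤ} (h : k < -(a : ℤ)) : T a b c k = 0 := by
  rw [T, B_of_neg (by omega : (a : ℤ) + k < 0)]; ring

lemma T_zero_of_lt_b {a b c : ℕ} {k : ℤ} (h : k < -(b : ℤ)) : T a b c k = 0 := by
  rw [T, B_of_neg (by omega : (b : ℤ) + k < 0)]; ring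

lemma T_zero_of_gt_a {a b c : ℕ} {k : ℤ} (h : (a : ℤ) < k) : T a b c k = 0 := by
  rw [T, B_of_gt (show ((c + a : ℕ) : ℤ) < (c : ℤ) + k by push_cast; omega)]; ring

lemma T_zero_of_gt_b {a b c : ℕ} {k : ℤ} (h : (b : ℤ) < k) : T a b c k = 0 := by
  rw [T, B_of_gt (show ((a + b : ℕ) : ℤ) < (a : ℤ) + k by push_cast; omega)]; ring

lemma pt_a (a b c : ℕ) (k : ℤ) :
    ((a : ℚ) + 1 + b) * ((a : ℚ) + 1 + c) * T a b c k
      = ((a : ℚ) + 1 + (k : ℚ)) * ((a : ℚ) + 1 - (k : ℚ)) * T (a + 1) b c k := by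
  have h1 := L1 (a + b) ((a : ℤ) + 1 + k)
  rw [show ((a : ℤ) + 1 + k - 1) = (a : ℤ) + k by ring] at h1
  have h2 := L2 (c + a) ((c : ℤ) + k)
  rw [T, T, show a + 1 + b = (a + b) + 1 by ring, show c + (a + 1) = (c + a) + 1 by ring,
    show ((a + 1 : ℕ) : ℤ) + k = (a : ℤ) + 1 + k by push_cast; ring]
  push_cast at h1 h2 ⊢
  linear_combination (-((-1 : ℚ) ^ k * B (b + c) ((b : ℤ) + k) * ((a : ℚ) + 1 - (k : ℚ))
        * B (c + a + 1) ((c : ℤ) + k))) * h1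
    + (-((-1 : ℚ) ^ k * B (b + c) ((b : ℤ) + k) * ((a : ℚ) + (b : ℚ) + 1)
        * B (a + b) ((a : ℤ) + k))) * h2

lemma pt_b (a b c : ℕ) (k : ℤ) :
    ((b : ℚ) + 1 + a) * ((b : ℚ) + 1 + c) * T a b c k
      = ((b : ℚ) + 1 + (k : ℚ)) * ((b : ℚ) + 1 - (k : ℚ)) * T a (b + 1) c k := by
  have h1 := L1 (b + c) ((b : ℤ) + 1 + k)
  rw [show ((b : ℤ) + 1 + k - 1) = (b : ℤ) + k by ring] at h1
  have h2 := L2 (a + b) ((a : ℤ) + k)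
  rw [T, T, show a + (b + 1) = (a + b) + 1 by ring, show (b + 1) + c = (b + c) + 1 by ring,
    show ((b + 1 : ℕ) : ℤ) + k = (b : ℤ) + 1 + k by push_cast; ring]
  push_cast at h1 h2 ⊢
  linear_combination (-((-1 : ℚ) ^ k * B (c + a) ((c : ℤ) + k) * ((b : ℚ) + 1 - (k : ℚ))
        * B (a + b + 1) ((a : ℤ) + k))) * h1
    + (-((-1 : ℚ) ^ k * B (c + a) ((c : ℤ) + k) * ((b : ℚ) + (c : ℚ) + 1)
        * B (b + c) ((b : ℤ) + k))) * h2

lemma pt_c (a b c : ℕ) (k : ℤ) :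
    ((c : ℚ) + 1 + a) * ((c : ℚ) + 1 + b) * T a b c k
      = ((c : ℚ) + 1 + (k : ℚ)) * ((c : ℚ) + 1 - (k : ℚ)) * T a b (c + 1) k := by
  have h1 := L1 (c + a) ((c : ℤ) + 1 + k)
  rw [show ((c : ℤ) + 1 + k - 1) = (c : ℤ) + k by ring] at h1
  have h2 := L2 (b + c) ((b : ℤ) + k)
  rw [T, T, show b + (c + 1) = (b + c) + 1 by ring, show (c + 1) + a = (c + a) + 1 by ring,
    show ((c + 1 : ℕ) : ℤ) + k = (c : ℤ) + 1 + k by push_cast; ring]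
  push_cast at h1 h2 ⊢
  linear_combination (-((-1 : ℚ) ^ k * B (a + b) ((a : ℤ) + k) * ((c : ℚ) + 1 - (k : ℚ))
        * B (b + c + 1) ((b : ℤ) + k))) * h1
    + (-((-1 : ℚ) ^ k * B (a + b) ((a : ℤ) + k) * ((c : ℚ) + (a : ℚ) + 1)
        * B (c + a) ((c : ℤ) + k))) * h2

lemma pt_shift (a b c : ℕ) (k : ℤ) :
    ((a : ℚ) + (k : ℚ) + 1) * ((b : ℚ) + (k : ℚ) + 1) * ((c : ℚ) + (k : ℚ) + 1)
        * T a b c (k + 1)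
      = -(((a : ℚ) - (k : ℚ)) * ((b : ℚ) - (k : ℚ)) * ((c : ℚ) - (k : ℚ))) * T a b c k := by
  have h1 := L3 (a + b) ((a : ℤ) + k + 1)
  rw [show ((a : ℤ) + k + 1 - 1) = (a : ℤ) + k by ring] at h1
  have h2 := L3 (b + c) ((b : ℤ) + k + 1)
  rw [show ((b : ℤ) + k + 1 - 1) = (b : ℤ) + k by ring] at h2
  have h3 := L3 (c + a) ((c : ℤ) + k + 1)
  rw [show ((c : ℤ) + k + 1 - 1) = (c : ℤ) + k by ring] at h3
  rw [T, T, show (a : ℤ) + (k + 1) = (a : ℤ) + k + 1 by ring,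
    show (b : ℤ) + (k + 1) = (b : ℤ) + k + 1 by ring,
    show (c : ℤ) + (k + 1) = (c : ℤ) + k + 1 by ring,
    zpow_add_one₀ (by norm_num : (-1 : ℚ) ≠ 0)]
  push_cast at h1 h2 h3 ⊢
  linear_combination
    (-1 : ℚ) * (-1 : ℚ) ^ k * ((b : ℚ) + (k : ℚ) + 1) * ((c : ℚ) + (k : ℚ) + 1)
        * B (b + c) ((b : ℤ) + k + 1) * B (c + a) ((c : ℤ) + k + 1) * h1
    + (-1 : ℚ) * (-1 : ℚ) ^ k * ((b : ℚ) - (k : ℚ)) * ((c : ℚ) + (k : ℚ) + 1)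
        * B (a + b) ((a : ℤ) + k) * B (c + a) ((c : ℤ) + k + 1) * h2
    + (-1 : ℚ) * (-1 : ℚ) ^ k * ((b : ℚ) - (k : ℚ)) * ((c : ℚ) - (k : ℚ))
        * B (a + b) ((a : ℤ) + k) * B (b + c) ((b : ℤ) + k) * h3

lemma T_zero_of_lt_c {a b c : ℕ} {k : ℤ} (h : k < -(c : ℤ)) : T a b c k = 0 := by
  rw [T, B_of_neg (by omega : (c : ℤ) + k < 0)]; ring

lemma T_zero_of_gt_c {a b c : ℕ} {k : ℤ} (h : (c : ℤ) < k) : T a b c k = 0 := by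
  rw [T, B_of_gt (show ((b + c : ℕ) : ℤ) < (b : ℤ) + k by push_cast; omega)]; ring

/-- The Dixon sum over a window of radius `N`. -/
def S (a b c N : ℕ) : ℚ := ∑ j ∈ Finset.range (2 * N + 1), T a b c ((j : ℤ) - N)

/-- Closed form. -/
def M (a b c : ℕ) : ℚ :=
  ((a + b + c).factorial : ℚ) / ((a.factorial : ℚ) * (b.factorial : ℚ) * (c.factorial : ℚ))

/-- certificate function -/
def Gf (a b c N : ℕ) (j : ℕ) : ℚ :=
  -(((a : ℚ) + (((j : ℤ) - (N : ℤ) : ℤ) : ℚ)) * ((b : ℚ) + (((j : ℤ) - (N : ℤ) : ℤ) : ℚ))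
    * ((c : ℚ) + (((j : ℤ) - (N : ℤ) : ℤ) : ℚ))) * T a b c ((j : ℤ) - N)

lemma tele (a b c N : ℕ) (ha : a ≤ N) (hb : b ≤ N) :
    ∑ j ∈ Finset.range (2 * N + 1),
      ((((a : ℚ) + b + c) * (((j : ℤ) - (N : ℤ) : ℤ) : ℚ) ^ 2 + (a : ℚ) * b * c)
        * T a b c ((j : ℤ) - N)) = 0 := by
  have key : ∀ j : ℕ, Gf a b c N (j + 1) - Gf a b c N j
      = 2 * ((((a : ℚ) + b + c) * (((j : ℤ) - (N : ℤ) : ℤ) : ℚ) ^ 2 + (a : ℚ) * b * c)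
        * T a b c ((j : ℤ) - N)) := by
    intro j
    have h := pt_shift a b c ((j : ℤ) - N)
    rw [Gf, Gf]
    have e : ((j + 1 : ℕ) : ℤ) - (N : ℤ) = ((j : ℤ) - N) + 1 := by push_cast; ring
    rw [e]
    push_cast at h ⊢
    linear_combination -h
  have htel := Finset.sum_range_sub (Gf a b c N) (2 * N + 1)
  have hend : Gf a b c N (2 * N + 1) = 0 := by
    rw [Gf]
    have : T a b c (((2 * N + 1 : ℕ) : ℤ) - N) = 0 :=
      T_zero_of_gt_b (by push_cast; omega)
    rw [this]; ring
  have hstart : Gf a b c N 0 = 0 := by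
    rw [Gf]
    rcases eq_or_lt_of_le ha with h' | h'
    · have e : ((a : ℚ) + ((((0 : ℕ) : ℤ) - (N : ℤ) : ℤ) : ℚ)) = 0 := by
        subst h'; push_cast; ring
      rw [e]; ring
    · have : T a b c (((0 : ℕ) : ℤ) - N) = 0 := T_zero_of_lt_a (by push_cast; omega)
      rw [this]; ring
  have h2 : ∑ j ∈ Finset.range (2 * N + 1),
      2 * ((((a : ℚ) + b + c) * (((j : ℤ) - (N : ℤ) : ℤ) : ℚ) ^ 2 + (a : ℚ) * b * c)
        * T a b c ((j : ℤ) - N)) = 0 := by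
    rw [← Finset.sum_congr rfl fun j _ => key j, htel, hend, hstart]; ring
  rw [← Finset.mul_sum] at h2
  linarith [h2]

lemma S_a0 (b c N : ℕ) : S 0 b c N = M 0 b c := by
  rw [S, Finset.sum_eq_single_of_mem N (by simp; omega)]
  · rw [show ((N : ℤ) - N) = 0 by ring, T,
      B_eq_choose (j := 0) (by norm_num) (by omega),
      B_eq_choose (j := b) (by norm_num) (by omega),
      B_eq_choose (j := c) (by norm_num) (by omega)]
    rw [M, Nat.cast_choose ℚ (show b ≤ b + c by omega)]
    simp [Nat.add_sub_cancel_left, Nat.factorial]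
    try ring
  · intro j hj hne
    rcases lt_or_gt_of_ne (show (j : ℤ) - N ≠ 0 by omega) with h | h
    · exact T_zero_of_lt_a (by omega)
    · exact T_zero_of_gt_a (by omega)

lemma S_b0 (a c N : ℕ) : S a 0 c N = M a 0 c := by
  rw [S, Finset.sum_eq_single_of_mem N (by simp; omega)]
  · rw [show ((N : ℤ) - N) = 0 by ring, T,
      B_eq_choose (j := a) (by norm_num) (by omega),
      B_eq_choose (j := 0) (by norm_num) (by omega),
      B_eq_choose (j := c) (by norm_num) (by omega)]
    rw [M, Nat.cast_choose ℚ (show c ≤ c + a by omega)]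
    rw [show c + a - c = a by omega, show a + 0 + c = c + a by ring]
    simp [Nat.factorial]
    try ring
  · intro j hj hne
    rcases lt_or_gt_of_ne (show (j : ℤ) - N ≠ 0 by omega) with h | h
    · exact T_zero_of_lt_b (by omega)
    · exact T_zero_of_gt_b (by omega)

lemma S_c0 (a b N : ℕ) : S a b 0 N = M a b 0 := by
  rw [S, Finset.sum_eq_single_of_mem N (by simp; omega)]
  · rw [show ((N : ℤ) - N) = 0 by ring, T,
      B_eq_choose (j := a) (by norm_num) (by omega),
      B_eq_choose (j := b) (by norm_num) (by omega),
      B_eq_choose (j := 0) (by norm_num) (by omega)]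
    rw [M, Nat.cast_choose ℚ (show a ≤ a + b by omega)]
    rw [show a + b - a = b by omega, show a + b + 0 = a + b by ring]
    simp [Nat.factorial]
    try ring
  · intro j hj hne
    rcases lt_or_gt_of_ne (show (j : ℤ) - N ≠ 0 by omega) with h | h
    · exact T_zero_of_lt_c (by omega)
    · exact T_zero_of_gt_c (by omega)

lemma M_rec (x y z : ℕ) :
    M (x + 1) (y + 1) (z + 1)
      = M x (y + 1) (z + 1) + M (x + 1) y (z + 1) + M (x + 1) (y + 1) z := by
  rw [M, M, M, M,
    show x + 1 + (y + 1) + (z + 1) = (x + y + z + 2) + 1 by ring,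
    show x + (y + 1) + (z + 1) = (x + y + z + 1) + 1 by ring,
    show x + 1 + y + (z + 1) = (x + y + z + 1) + 1 by ring,
    show x + 1 + (y + 1) + z = (x + y + z + 1) + 1 by ring,
    Nat.factorial_succ (x + y + z + 2), Nat.factorial_succ (x + y + z + 1),
    Nat.factorial_succ x, Nat.factorial_succ y, Nat.factorial_succ z]
  have hx : (x.factorial : ℚ) ≠ 0 := Nat.cast_ne_zero.2 x.factorial_pos.ne'
  have hy : (y.factorial : ℚ) ≠ 0 := Nat.cast_ne_zero.2 y.factorial_pos.ne'
  have hz : (z.factorial : ℚ) ≠ 0 := Nat.cast_ne_zero.2 z.factorial_pos.ne'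
  have hx1 : ((x : ℚ) + 1) ≠ 0 := by positivity
  have hy1 : ((y : ℚ) + 1) ≠ 0 := by positivity
  have hz1 : ((z : ℚ) + 1) ≠ 0 := by positivity
  push_cast
  field_simp
  ring

lemma dixon : ∀ n a b c N : ℕ, a + b + c = n → a ≤ N → b ≤ N → c ≤ N →
    S a b c N = M a b c := by
  intro n
  induction n with
  | zero =>
    intro a b c N h ha hb hc
    obtain ⟨rfl, rfl, rfl⟩ : a = 0 ∧ b = 0 ∧ c = 0 := by omega
    exact S_a0 0 0 N
  | succ n ih =>
    intro a b c N h ha hb hc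
    rcases Nat.eq_zero_or_eq_succ_pred a with rfl | haa
    · exact S_a0 b c N
    rcases Nat.eq_zero_or_eq_succ_pred b with rfl | hbb
    · exact S_b0 a c N
    rcases Nat.eq_zero_or_eq_succ_pred c with rfl | hcc
    · exact S_c0 a b N
    obtain ⟨x, rfl⟩ : ∃ x, a = x + 1 := ⟨a - 1, by omega⟩
    obtain ⟨y, rfl⟩ : ∃ y, b = y + 1 := ⟨b - 1, by omega⟩
    obtain ⟨z, rfl⟩ : ∃ z, c = z + 1 := ⟨c - 1, by omega⟩
    have hsum : (((x : ℚ) + 1) + ((y : ℚ) + 1)) * (((y : ℚ) + 1) + ((z : ℚ) + 1))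
          * (((z : ℚ) + 1) + ((x : ℚ) + 1))
          * (S (x+1) (y+1) (z+1) N - S x (y+1) (z+1) N - S (x+1) y (z+1) N
            - S (x+1) (y+1) z N)
        = ∑ j ∈ Finset.range (2 * N + 1),
            2 * (((((x:ℚ)+1) + ((y:ℚ)+1) + ((z:ℚ)+1)) * (((j : ℤ) - (N : ℤ) : ℤ) : ℚ) ^ 2
              + ((x:ℚ)+1) * ((y:ℚ)+1) * ((z:ℚ)+1)) * T (x+1) (y+1) (z+1) ((j : ℤ) - N)) := by
      simp only [S, ← Finset.sum_sub_distrib, Finset.mul_sum]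
      refine Finset.sum_congr rfl fun j _ => ?_
      have h1 := pt_a x (y+1) (z+1) ((j : ℤ) - N)
      have h2 := pt_b (x+1) y (z+1) ((j : ℤ) - N)
      have h3 := pt_c (x+1) (y+1) z ((j : ℤ) - N)
      push_cast at h1 h2 h3 ⊢
      linear_combination (-(((y:ℚ)+1) + ((z:ℚ)+1))) * h1
        + (-(((z:ℚ)+1) + ((x:ℚ)+1))) * h2 + (-(((x:ℚ)+1) + ((y:ℚ)+1))) * h3
    have htele := tele (x+1) (y+1) (z+1) N ha hb
    have h0 : ∑ j ∈ Finset.range (2 * N + 1),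
        2 * (((((x:ℚ)+1) + ((y:ℚ)+1) + ((z:ℚ)+1)) * (((j : ℤ) - (N : ℤ) : ℤ) : ℚ) ^ 2
          + ((x:ℚ)+1) * ((y:ℚ)+1) * ((z:ℚ)+1)) * T (x+1) (y+1) (z+1) ((j : ℤ) - N)) = 0 := by
      push_cast at htele ⊢
      rw [← Finset.mul_sum, htele]; ring
    rw [h0] at hsum
    have hne : (((x : ℚ) + 1) + ((y : ℚ) + 1)) * (((y : ℚ) + 1) + ((z : ℚ) + 1))
        * (((z : ℚ) + 1) + ((x : ℚ) + 1)) ≠ 0 := by positivity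
    have hS : S (x+1) (y+1) (z+1) N
        = S x (y+1) (z+1) N + S (x+1) y (z+1) N + S (x+1) (y+1) z N := by
      have := mul_eq_zero.mp hsum
      rcases this with h' | h'
      · exact absurd h' hne
      · linarith [h']
    rw [hS, ih x (y+1) (z+1) N (by omega) (by omega) hb hc,
      ih (x+1) y (z+1) N (by omega) ha (by omega) hc,
      ih (x+1) (y+1) z N (by omega) ha hb (by omega)]
    exact (M_rec x y z).symm

lemma S_eq_Icc (a b c N : ℕ) :
    S a b c N = ∑ k ∈ Finset.Icc (-(N : ℤ)) (N : ℤ), T a b c k := by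
  rw [S]
  apply Finset.sum_bij' (i := fun (j : ℕ) (_ : j ∈ Finset.range (2 * N + 1)) => (j : ℤ) - N)
    (j := fun (k : ℤ) (_ : k ∈ Finset.Icc (-(N : ℤ)) (N : ℤ)) => (k + N).toNat)
  · intro j hj
    simp only [Finset.mem_range] at hj
    simp only [Finset.mem_Icc]
    omega
  · intro k hk
    simp only [Finset.mem_Icc] at hk
    simp only [Finset.mem_range]
    omega
  · intro j hj; omega
  · intro k hk
    simp only [Finset.mem_Icc] at hk
    omega
  · intro j hj; rfl

lemma sum_Icc_T (a b c N : ℕ) (ha : a ≤ N) (hb : b ≤ N) :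
    ∑ k ∈ Finset.Icc (-(N : ℤ)) (N : ℤ), T a b c k
      = ∑ k ∈ Finset.Icc (-((min a b : ℕ) : ℤ)) ((min a b : ℕ) : ℤ), T a b c k := by
  symm
  apply Finset.sum_subset
  · intro k hk
    simp only [Finset.mem_Icc] at hk ⊢
    push_cast at hk ⊢
    omega
  · intro k hk hnk
    simp only [Finset.mem_Icc] at hk hnk
    push_cast at hk hnk
    by_cases h1 : k < -(a : ℤ)
    · exact T_zero_of_lt_a h1
    by_cases h2 : (b : ℤ) < k
    · exact T_zero_of_gt_b h2
    by_cases h3 : k < -(b : ℤ)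
    · exact T_zero_of_lt_b h3
    · exact T_zero_of_gt_a (by omega)

end TransvectantAux

open TransvectantAux in
theorem transvectant_coefficient_formula' (m s r : ℕ) (hm : 1 ≤ m) (hr : r = 2 * s)
    (hrd : r < 2 * m) :
    (∑ i ∈ Finset.Icc (r + 1 - m) (min r (m - 1)),
        (-1 : ℚ) ^ i * (r.choose i : ℚ) * ((m + i - r).ascFactorial (r - i) : ℚ) *
          ((m - i + 2).ascFactorial i : ℚ) * ((m - i).ascFactorial i : ℚ) *
          ((m + i + 2 - r).ascFactorial (r - i) : ℚ)) =
      (-1 : ℚ) ^ s * ((2 * s).factorial : ℚ) * ((m - 1).factorial : ℚ) *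
          ((m + 1).factorial : ℚ) * ((2 * m - s).factorial : ℚ) /
        ((s.factorial : ℚ) * ((m - s - 1).factorial : ℚ) * ((m - s + 1).factorial : ℚ) *
          ((2 * m - 2 * s).factorial : ℚ)) := by
  subst hr
  have hsm : s < m := by omega
  have key := dixon (s + (m - s - 1) + (m - s + 1)) s (m - s - 1) (m - s + 1) (2 * m) rfl
    (by omega) (by omega) (by omega)
  have e1 := S_eq_Icc s (m - s - 1) (m - s + 1) (2 * m)
  have e2 := sum_Icc_T s (m - s - 1) (m - s + 1) (2 * m) (by omega) (by omega)
  have e3 : (∑ i ∈ Finset.Icc (2 * s + 1 - m) (min (2 * s) (m - 1)),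
        (-1 : ℚ) ^ i * ((2 * s).choose i : ℚ) * ((m + i - 2 * s).ascFactorial (2 * s - i) : ℚ) *
          ((m - i + 2).ascFactorial i : ℚ) * ((m - i).ascFactorial i : ℚ) *
          ((m + i + 2 - 2 * s).ascFactorial (2 * s - i) : ℚ))
      = ∑ k ∈ Finset.Icc (-((min s (m - s - 1) : ℕ) : ℤ)) ((min s (m - s - 1) : ℕ) : ℤ),
          ((-1 : ℚ) ^ s * ((2 * s).factorial : ℚ) * ((m - 1).factorial : ℚ)
              * ((m + 1).factorial : ℚ) / ((2 * m - 2 * s).factorial : ℚ))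
            * T s (m - s - 1) (m - s + 1) k := by
    apply Finset.sum_bij'
      (i := fun (i : ℕ) (_ : i ∈ Finset.Icc (2 * s + 1 - m) (min (2 * s) (m - 1))) => (i : ℤ) - s)
      (j := fun (k : ℤ) _ => (k + s).toNat)
    · intro i hi
      simp only [Finset.mem_Icc] at hi ⊢
      push_cast
      omega
    · intro k hk
      simp only [Finset.mem_Icc] at hk ⊢
      push_cast at hk
      omega
    · intro i hi; omega
    · intro k hk
      simp only [Finset.mem_Icc] at hk
      push_cast at hk
      omega
    · intro i hi
      simp only [Finset.mem_Icc] at hi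
      obtain ⟨hi1, hi2⟩ := hi
      have h1 : i ≤ m - 1 := by omega
      have h2 : i ≤ 2 * s := by omega
      have h3 : 2 * s + 1 ≤ m + i := by omega
      rw [T, show s + (m - s - 1) = m - 1 by omega,
        show (m - s - 1) + (m - s + 1) = 2 * m - 2 * s by omega,
        show (m - s + 1) + s = m + 1 by omega,
        B_eq_choose (j := i) (by omega) (by omega),
        B_eq_choose (j := m + i - 2 * s - 1) (by omega) (by omega),
        B_eq_choose (j := m + i - 2 * s + 1) (by omega) (by omega)]
      rw [Nat.cast_choose ℚ (show i ≤ 2 * s by omega),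
        Nat.cast_choose ℚ (show i ≤ m - 1 by omega),
        Nat.cast_choose ℚ (show m + i - 2 * s - 1 ≤ 2 * m - 2 * s by omega),
        Nat.cast_choose ℚ (show m + i - 2 * s + 1 ≤ m + 1 by omega)]
      rw [show m - 1 - i = m - i - 1 by omega,
        show 2 * m - 2 * s - (m + i - 2 * s - 1) = m - i + 1 by omega,
        show m + 1 - (m + i - 2 * s + 1) = 2 * s - i by omega]
      have hA1 := Nat.factorial_mul_ascFactorial (m + i - 2 * s - 1) (2 * s - i)
      rw [show m + i - 2 * s - 1 + 1 = m + i - 2 * s by omega,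
        show m + i - 2 * s - 1 + (2 * s - i) = m - 1 by omega] at hA1
      have hA2 := Nat.factorial_mul_ascFactorial (m - i + 1) i
      rw [show m - i + 1 + 1 = m - i + 2 by omega,
        show m - i + 1 + i = m + 1 by omega] at hA2
      have hA3 := Nat.factorial_mul_ascFactorial (m - i - 1) i
      rw [show m - i - 1 + 1 = m - i by omega,
        show m - i - 1 + i = m - 1 by omega] at hA3
      have hA4 := Nat.factorial_mul_ascFactorial (m + i - 2 * s + 1) (2 * s - i)
      rw [show m + i - 2 * s + 1 + 1 = m + i + 2 - 2 * s by omega,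
        show m + i - 2 * s + 1 + (2 * s - i) = m + 1 by omega] at hA4
      have ne1 : ((m + i - 2 * s - 1).factorial : ℚ) ≠ 0 :=
        Nat.cast_ne_zero.2 (Nat.factorial_pos _).ne'
      have ne2 : ((m - i + 1).factorial : ℚ) ≠ 0 :=
        Nat.cast_ne_zero.2 (Nat.factorial_pos _).ne'
      have ne3 : ((m - i - 1).factorial : ℚ) ≠ 0 :=
        Nat.cast_ne_zero.2 (Nat.factorial_pos _).ne'
      have ne4 : ((m + i - 2 * s + 1).factorial : ℚ) ≠ 0 :=
        Nat.cast_ne_zero.2 (Nat.factorial_pos _).ne'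
      have dA1 : ((m + i - 2 * s).ascFactorial (2 * s - i) : ℚ)
          = ((m - 1).factorial : ℚ) / ((m + i - 2 * s - 1).factorial : ℚ) := by
        rw [eq_div_iff ne1, mul_comm]
        exact_mod_cast congrArg (Nat.cast (R := ℚ)) hA1
      have dA2 : ((m - i + 2).ascFactorial i : ℚ)
          = ((m + 1).factorial : ℚ) / ((m - i + 1).factorial : ℚ) := by
        rw [eq_div_iff ne2, mul_comm]
        exact_mod_cast congrArg (Nat.cast (R := ℚ)) hA2
      have dA3 : ((m - i).ascFactorial i : ℚ)
          = ((m - 1).factorial : ℚ) / ((m - i - 1).factorial : ℚ) := by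
        rw [eq_div_iff ne3, mul_comm]
        exact_mod_cast congrArg (Nat.cast (R := ℚ)) hA3
      have dA4 : ((m + i + 2 - 2 * s).ascFactorial (2 * s - i) : ℚ)
          = ((m + 1).factorial : ℚ) / ((m + i - 2 * s + 1).factorial : ℚ) := by
        rw [eq_div_iff ne4, mul_comm]
        exact_mod_cast congrArg (Nat.cast (R := ℚ)) hA4
      rw [dA1, dA2, dA3, dA4,
        zpow_sub₀ (by norm_num : (-1 : ℚ) ≠ 0), zpow_natCast, zpow_natCast]
      have ne5 : ((i.factorial : ℚ)) ≠ 0 := Nat.cast_ne_zero.2 (Nat.factorial_pos _).ne'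
      have ne6 : (((2 * s - i).factorial : ℚ)) ≠ 0 := Nat.cast_ne_zero.2 (Nat.factorial_pos _).ne'
      have ne7 : (((2 * m - 2 * s).factorial : ℚ)) ≠ 0 := Nat.cast_ne_zero.2 (Nat.factorial_pos _).ne'
      have ne8 : ((-1 : ℚ) ^ s) ≠ 0 := by
        apply pow_ne_zero; norm_num
      have ne9 : ((-1 : ℚ) ^ i) ≠ 0 := by
        apply pow_ne_zero; norm_num
      have hsq : ((-1 : ℚ) ^ s) * ((-1 : ℚ) ^ s) = 1 := by
        rw [← pow_add]
        exact Even.neg_one_pow ⟨s, rfl⟩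
      field_simp
      try ring
      try (ring_nf; rw [show ((-1 : ℚ) ^ s) ^ 2 = 1 by rw [sq]; exact hsq]; ring)
  rw [e3, ← Finset.mul_sum, ← e2, ← e1, key, M,
    show s + (m - s - 1) + (m - s + 1) = 2 * m - s by omega]
  have f1 : ((s.factorial : ℚ)) ≠ 0 := Nat.cast_ne_zero.2 (Nat.factorial_pos _).ne'
  have f2 : (((m - s - 1).factorial : ℚ)) ≠ 0 := Nat.cast_ne_zero.2 (Nat.factorial_pos _).ne'
  have f3 : (((m - s + 1).factorial : ℚ)) ≠ 0 := Nat.cast_ne_zero.2 (Nat.factorial_pos _).ne'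
  have f4 : (((2 * m - 2 * s).factorial : ℚ)) ≠ 0 := Nat.cast_ne_zero.2 (Nat.factorial_pos _).ne'
  field_simp



/-- Evaluation of the transvectant coefficient `c_{m,2s}`: for `m ≥ 1` and even
`r = 2s < 2m`,
`Σ_i (-1)^i C(r,i) (m-r+i)_{r-i} (m-i+2)_i (m-i)_i (m-r+i+2)_{r-i}
  = (-1)^s (2s)! (m-1)! (m+1)! (2m-s)! / (s! (m-s-1)! (m-s+1)! (2m-2s)!)`,
where `(x)_n` is the rising factorial and the sum is over
`max(0, r-m+1) ≤ i ≤ min(r, m-1)`. -/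
theorem transvectant_coefficient_formula (m s r : ℕ) (hm : 1 ≤ m) (hr : r = 2 * s)
    (hrd : r < 2 * m) :
    (∑ i ∈ Finset.Icc (r + 1 - m) (min r (m - 1)),
        (-1 : ℚ) ^ i * (r.choose i : ℚ) * ((m + i - r).ascFactorial (r - i) : ℚ) *
          ((m - i + 2).ascFactorial i : ℚ) * ((m - i).ascFactorial i : ℚ) *
          ((m + i + 2 - r).ascFactorial (r - i) : ℚ)) =
      (-1 : ℚ) ^ s * ((2 * s).factorial : ℚ) * ((m - 1).factorial : ℚ) *
          ((m + 1).factorial : ℚ) * ((2 * m - s).factorial : ℚ) /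
        ((s.factorial : ℚ) * ((m - s - 1).factorial : ℚ) * ((m - s + 1).factorial : ℚ) *
          ((2 * m - 2 * s).factorial : ℚ)) := by
  exact transvectant_coefficient_formula' m s r hm hr hrd
end
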